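/- Let G be a finite simple graph with vertex set [n] = {1,...,n}, with the edges of G ordered lexicographically. Then every increasing spanning forest of G is an NBC set; in particular, for every m ≥ 0 the set of m-edge increasing spanning forests of G is contained in the set of m-edge NBC sets of G. -/

import Mathlib

open Polynomial Classical

/-- A simple graph on a linearly ordered vertex type is an *increasing forest*. -/
def IsIncreasingForest {V : Type*} [LinearOrder V] (F : SimpleGraph V) : Prop :=
  F.IsAcyclic ∧ ∀ (r v : V), (∀ w, F.Reachable r w → r ≤ w) →
    ∀ p : F.Walk r v, p.IsPath → p.support.Chain' (· < ·)

/-- `F` is an increasing spanning forest of `G`. -/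
def IsISF {n : ℕ} (G : SimpleGraph (Fin n)) (F : Finset (Sym2 (Fin n))) : Prop :=
  (F : Set (Sym2 (Fin n))) ⊆ G.edgeSet ∧
    IsIncreasingForest (SimpleGraph.fromEdgeSet (F : Set (Sym2 (Fin n))))

/-- Lexicographic order on edges, writing each edge with its smaller endpoint first:
`ij ≤ kl` iff `i < k`, or `i = k` and `j ≤ l`. -/
def edgeLE {n : ℕ} (e f : Sym2 (Fin n)) : Prop :=
  Sym2.inf e < Sym2.inf f ∨ (Sym2.inf e = Sym2.inf f ∧ Sym2.sup e ≤ Sym2.sup f)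

/-- `B` is a broken circuit of `G`: the edge set of a cycle of `G` with its
lexicographically smallest edge removed. -/
def IsBrokenCircuit {n : ℕ} (G : SimpleGraph (Fin n)) (B : Finset (Sym2 (Fin n))) : Prop :=
  ∃ (v : Fin n) (c : G.Walk v v) (e : Sym2 (Fin n)), c.IsCycle ∧ e ∈ c.edges ∧
    (∀ f ∈ c.edges, edgeLE e f) ∧ B = c.edges.toFinset.erase e

/-- `N` is an NBC set of `G`: a set of edges of `G` containing no broken circuit. -/
def IsNBC {n : ℕ} (G : SimpleGraph (Fin n)) (N : Finset (Sym2 (Fin n))) : Prop :=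
  (N : Set (Sym2 (Fin n))) ⊆ G.edgeSet ∧
    ∀ B : Finset (Sym2 (Fin n)), IsBrokenCircuit G B → ¬ B ⊆ N

section Aux

variable {n : ℕ}

lemma sym2_mk_inf_sup (e : Sym2 (Fin n)) : e = s(e.inf, e.sup) := by
  induction e using Sym2.ind with
  | _ x y =>
    rcases le_total x y with h | h
    · simp [Sym2.inf_mk, Sym2.sup_mk, inf_eq_left.2 h, sup_eq_right.2 h]
    · rw [Sym2.eq_swap]
      simp [inf_eq_right.2 h, sup_eq_left.2 h, h]

lemma sym2_inf_lt_sup {e : Sym2 (Fin n)} (h : ¬ e.IsDiag) : e.inf < e.sup := by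
  induction e using Sym2.ind with
  | _ x y =>
    rw [Sym2.mk_isDiag_iff] at h
    rcases lt_or_gt_of_ne h with h' | h'
    · simpa [inf_eq_left.2 h'.le, sup_eq_right.2 h'.le] using h'
    · simpa [inf_eq_right.2 h'.le, sup_eq_left.2 h'.le] using h'

lemma sym2_inf_le_of_mem {e : Sym2 (Fin n)} {y : Fin n} (h : y ∈ e) : e.inf ≤ y := by
  induction e using Sym2.ind with
  | _ x z =>
    rw [Sym2.mem_iff] at h
    rcases h with rfl | rfl
    · exact inf_le_left
    · exact inf_le_right

lemma le_getLast_of_chain' {l : List (Fin n)} (h : l.Chain' (· < ·)) {x : Fin n}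
    (hx : x ∈ l) (hl : l ≠ []) : x ≤ l.getLast hl := by
  replace h := List.isChain_iff_pairwise.1 h
  rcases List.mem_iff_append.1 hx with ⟨s, t, rfl⟩
  have hp : (x :: t).Pairwise (· < ·) := h.sublist (List.sublist_append_right _ _)
  cases t with
  | nil =>
    rw [List.getLast_append_right (l := s) (by simp)]
    simp
  | cons y t =>
    have hmem : (s ++ x :: y :: t).getLast hl ∈ y :: t := by
      rw [List.getLast_append_right (l := s) (by simp)]
      have : (x :: y :: t).getLast (by simp) = (y :: t).getLast (by simp) := by
        simp [List.getLast_cons]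
      rw [this]
      exact List.getLast_mem _
    exact (List.pairwise_cons.1 hp).1 _ hmem |>.le

lemma walk_support_cases {V : Type*} {H : SimpleGraph V} {u v : V} (q : H.Walk u v) :
    ∀ y ∈ q.support, y = u ∨ ∃ f ∈ q.edges, y ∈ f := by
  induction q with
  | nil => simp
  | @cons u u' v h q ih =>
    intro y hy
    rw [SimpleGraph.Walk.support_cons] at hy
    rcases List.mem_cons.1 hy with rfl | hy
    · exact Or.inl rfl
    · rcases ih y hy with rfl | ⟨f, hf, hyf⟩
      · exact Or.inr ⟨s(u, y), by simp, by simp⟩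
      · exact Or.inr ⟨f, by simp [hf], hyf⟩

end Aux


theorem stmt_3 {n : ℕ} (G : SimpleGraph (Fin n)) :
    (∀ F : Finset (Sym2 (Fin n)), IsISF G F → IsNBC G F) ∧
    ∀ m : ℕ,
      {F : Finset (Sym2 (Fin n)) | IsISF G F ∧ F.card = m} ⊆
        {F : Finset (Sym2 (Fin n)) | IsNBC G F ∧ F.card = m} := by
  have main : ∀ F : Finset (Sym2 (Fin n)), IsISF G F → IsNBC G F := by
    intro F hF
    refine ⟨hF.1, ?_⟩
    rintro B ⟨v, c, e, hc, he, hmin, rfl⟩ hBF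
    set H := SimpleGraph.fromEdgeSet (F : Set (Sym2 (Fin n))) with hH
    have hInc := hF.2.2
    have heG : e ∈ G.edgeSet := c.edges_subset_edgeSet he
    have hed : ¬ e.IsDiag := G.not_isDiag_of_mem_edgeSet heG
    obtain ⟨a, b, hab, heab⟩ : ∃ a b : Fin n, a < b ∧ e = s(a, b) :=
      ⟨e.inf, e.sup, sym2_inf_lt_sup hed, sym2_mk_inf_sup e⟩
    have hinfe : e.inf = a := by rw [heab]; simpa using inf_eq_left.2 hab.le
    have hsupe : e.sup = b := by rw [heab]; simpa using sup_eq_right.2 hab.le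
    -- every endpoint of a cycle edge is ≥ a
    have hcyc_ge : ∀ f ∈ c.edges, ∀ y ∈ f, a ≤ y := by
      intro f hf y hy
      rcases hmin f hf with h | ⟨h, _⟩
      · rw [hinfe] at h
        exact le_of_lt (lt_of_lt_of_le h (sym2_inf_le_of_mem hy))
      · rw [hinfe] at h
        exact h ▸ sym2_inf_le_of_mem hy
    -- cycle edges other than e are edges of H
    have hBmem : ∀ f ∈ c.edges, f ≠ e → f ∈ H.edgeSet := by
      intro f hf hfe
      have hfF : f ∈ F := hBF (Finset.mem_erase.2 ⟨hfe, List.mem_toFinset.2 hf⟩)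
      rw [hH, SimpleGraph.edgeSet_fromEdgeSet]
      exact ⟨hfF, G.not_isDiag_of_mem_edgeSet (hF.1 hfF)⟩
    -- restrict the cycle to its own edges and delete e
    set G' := SimpleGraph.fromEdgeSet {f | f ∈ c.edges} with hG'
    have hce : ∀ f ∈ c.edges, f ∈ G'.edgeSet := by
      intro f hf
      rw [hG', SimpleGraph.edgeSet_fromEdgeSet]
      exact ⟨hf, G.not_isDiag_of_mem_edgeSet (c.edges_subset_edgeSet hf)⟩
    have hc' : (c.transfer G' hce).IsCycle := hc.transfer hce
    have he' : s(a, b) ∈ (c.transfer G' hce).edges := by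
      rw [SimpleGraph.Walk.edges_transfer]; exact heab ▸ he
    have hreach : (G' \ SimpleGraph.fromEdgeSet {s(a, b)}).Reachable a b :=
      (SimpleGraph.adj_and_reachable_delete_edges_iff_exists_cycle.2
        ⟨v, c.transfer G' hce, hc', he'⟩).2
    obtain ⟨w0⟩ := hreach
    have hw0 : ∀ f ∈ w0.edges, f ∈ c.edges ∧ f ≠ e := by
      intro f hf
      have hfe := w0.edges_subset_edgeSet hf
      rw [SimpleGraph.edgeSet_sdiff, SimpleGraph.edgeSet_fromEdgeSet,
        SimpleGraph.edgeSet_fromEdgeSet] at hfe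
      obtain ⟨⟨hf1, hf2⟩, hf3⟩ := hfe
      refine ⟨hf1, fun hfeq => hf3 ?_⟩
      exact ⟨by rw [hfeq, heab]; exact Set.mem_singleton _, hf2⟩
    -- the root of the component of a
    have hne : (Finset.univ.filter fun w => H.Reachable a w).Nonempty :=
      ⟨a, by simp [SimpleGraph.Reachable.refl]⟩
    set r := (Finset.univ.filter fun w => H.Reachable a w).min' hne with hr
    have hrar : H.Reachable a r :=
      (Finset.mem_filter.1 (Finset.min'_mem _ hne)).2
    have hroot : ∀ w, H.Reachable r w → r ≤ w := fun w hw =>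
      Finset.min'_le _ w (Finset.mem_filter.2 ⟨Finset.mem_univ _, hrar.trans hw⟩)
    obtain ⟨Q0⟩ := hrar.symm
    have hQchain : (Q0.toPath : H.Walk r a).support.Chain' (· < ·) :=
      hInc r a hroot _ Q0.toPath.2
    have hQle : ∀ y ∈ (Q0.toPath : H.Walk r a).support, y ≤ a := by
      intro y hy
      have := le_getLast_of_chain' hQchain hy (SimpleGraph.Walk.support_ne_nil _)
      rwa [SimpleGraph.Walk.getLast_support] at this
    -- the key argument, for an arbitrary path from a to b avoiding e inside the cycle
    have key : ∀ (P : H.Walk a b), P.IsPath →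
        (∀ f ∈ P.edges, f ∈ c.edges ∧ f ≠ e) → False := by
      intro P hPpath hPed
      have hgea : ∀ y ∈ P.support, a ≤ y := by
        intro y hy
        rcases walk_support_cases P y hy with rfl | ⟨f, hf, hyf⟩
        · exact le_refl _
        · exact hcyc_ge f (hPed f hf).1 y hyf
      cases P with
      | nil => exact lt_irrefl a hab
      | @cons _ x _ h q =>
        have hfax : s(a, x) ∈ c.edges ∧ s(a, x) ≠ e := hPed _ (by simp)
        have haxle : a ≤ x := hcyc_ge _ hfax.1 x (by simp)
        have hax : a < x := lt_of_le_of_ne haxle h.ne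
        have hbx : b ≤ x := by
          rcases hmin _ hfax.1 with hlt | ⟨_, hle⟩
          · rw [hinfe] at hlt
            simp [inf_eq_left.2 hax.le] at hlt
          · rw [hsupe] at hle
            simpa [sup_eq_right.2 hax.le] using hle
        have hxb : b < x := hbx.lt_of_ne (by rintro rfl; exact hfax.2 heab.symm)
        -- assemble the path from r to b
        rw [SimpleGraph.Walk.cons_isPath_iff] at hPpath
        set W := (Q0.toPath : H.Walk r a).append (SimpleGraph.Walk.cons h q) with hW
        have hWsup : W.support = (Q0.toPath : H.Walk r a).support ++ q.support := by
          rw [hW, SimpleGraph.Walk.support_append, SimpleGraph.Walk.support_cons]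
          rfl
        have hWpath : W.IsPath := by
          rw [SimpleGraph.Walk.isPath_def, hWsup]
          refine List.Nodup.append Q0.toPath.2.support_nodup hPpath.1.support_nodup ?_
          intro y hy1 hy2
          have h1 : y ≤ a := hQle y hy1
          have h2 : a ≤ y := hgea y (by rw [SimpleGraph.Walk.support_cons]; exact List.mem_cons_of_mem _ hy2)
          have : y = a := le_antisymm h1 h2
          exact hPpath.2 (this ▸ hy2)
        have hWchain : W.support.Chain' (· < ·) := hInc r b hroot W hWpath
        have hxW : x ∈ W.support := by
          rw [hWsup]
          exact List.mem_append_right _ q.start_mem_support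
        have hxle : x ≤ b := by
          have := le_getLast_of_chain' hWchain hxW (SimpleGraph.Walk.support_ne_nil _)
          rwa [SimpleGraph.Walk.getLast_support] at this
        exact absurd hxle (not_le.2 hxb)
    have hsub : ∀ f ∈ w0.edges, f ∈ H.edgeSet :=
      fun f hf => hBmem f (hw0 f hf).1 (hw0 f hf).2
    refine key ((w0.transfer H hsub).toPath : H.Walk a b) (w0.transfer H hsub).toPath.2 ?_
    intro f hf
    have hf' : f ∈ (w0.transfer H hsub).edges := SimpleGraph.Walk.edges_toPath_subset _ hf
    rw [SimpleGraph.Walk.edges_transfer] at hf'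
    exact hw0 f hf'
  refine ⟨main, fun m F hF => ⟨main F hF.1, hF.2⟩⟩
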